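/- For every n ∈ ℕ, the clique number of the commuting graph of the group S₃ × Cₙ (direct product of the symmetric group on 3 letters with the cyclic group of order n) equals 2n. -/

import Mathlib

/-- The commuting graph of a (non-commutative) semigroup: vertices are the
non-central elements, two distinct vertices are adjacent iff they commute. -/
def commGraph (S : Type*) [Mul S] : SimpleGraph {x : S // x ∉ Set.center S} where
  Adj a b := a ≠ b ∧ (a : S) * b = (b : S) * a
  symm := ⟨fun a b h => ⟨h.1.symm, h.2.symm⟩⟩
  loopless := ⟨fun a h => h.1 rfl⟩

theorem cliqueNum_commGraph_S3_prod_cyclic (n : ℕ) (hn : 0 < n) :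
    (commGraph (Equiv.Perm (Fin 3) × Multiplicative (ZMod n))).cliqueNum = 2 * n := by
  haveI : NeZero n := ⟨hn.ne'⟩
  classical
  set S := Equiv.Perm (Fin 3) × Multiplicative (ZMod n)
  -- non-centrality criterion
  have hcen : ∀ x : S, x.1 ≠ 1 → x ∉ Set.center S := by
    intro x hx hmem
    apply hx
    have h := (Semigroup.mem_center_iff.mp hmem)
    -- x.1 commutes with everything in S₃
    have h1 : ∀ g : Equiv.Perm (Fin 3), g * x.1 = x.1 * g := by
      intro g
      have := h (g, 1)
      exact congrArg Prod.fst this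
    have key : ∀ σ : Equiv.Perm (Fin 3), σ ∈ Set.center (Equiv.Perm (Fin 3)) → σ = 1 := by
      decide
    exact key _ (Semigroup.mem_center_iff.mpr h1)
  have hcen' : ∀ x : S, x.1 = 1 → x ∈ Set.center S := by
    intro x hx
    apply Semigroup.mem_center_iff.mpr
    intro g
    refine Prod.ext ?_ (mul_comm _ _)
    show g.1 * x.1 = x.1 * g.1
    rw [hx, mul_one, one_mul]
  -- the non-identity criterion for vertices
  have hne1 : ∀ x : {x : S // x ∉ Set.center S}, (x : S).1 ≠ 1 := by
    intro x hx
    exact x.2 (hcen' _ hx)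
  apply le_antisymm
  · -- upper bound
    obtain ⟨s, hs⟩ := SimpleGraph.exists_isNClique_cliqueNum
      (G := commGraph S)
    rw [← hs.card_eq]
    rcases Finset.eq_empty_or_nonempty s with rfl | ⟨x₀, hx₀⟩
    · simp
    set σ₀ := (x₀ : S).1 with hσ₀
    have hσ₀1 : σ₀ ≠ 1 := hne1 x₀
    set F : Finset (Equiv.Perm (Fin 3)) :=
      Finset.univ.filter (fun τ => τ ≠ 1 ∧ σ₀ * τ = τ * σ₀) with hF
    have hFcard : F.card ≤ 2 := by
      revert hσ₀1
      rw [hF]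
      generalize σ₀ = σ
      revert σ
      decide
    have hmap : ∀ x ∈ s, (x : S) ∈ F ×ˢ (Finset.univ : Finset (Multiplicative (ZMod n))) := by
      intro x hx
      rw [Finset.mem_product]
      refine ⟨Finset.mem_filter.mpr ⟨Finset.mem_univ _, hne1 x, ?_⟩, Finset.mem_univ _⟩
      rcases eq_or_ne x x₀ with rfl | hne
      · rfl
      · have hadj := hs.isClique hx₀ hx (Ne.symm hne)
        exact (congrArg Prod.fst hadj.2)
    calc s.card ≤ (F ×ˢ (Finset.univ : Finset (Multiplicative (ZMod n)))).card :=
          Finset.card_le_card_of_injOn (fun x => (x : S)) hmap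
            (fun a _ b _ h => Subtype.ext h)
      _ = F.card * n := by
          rw [Finset.card_product, Finset.card_univ]
          congr 1
          simp [ZMod.card]
      _ ≤ 2 * n := Nat.mul_le_mul_right n hFcard
  · -- lower bound: exhibit a clique of size 2n
    set c : Equiv.Perm (Fin 3) := finRotate 3 with hc
    have hcne : c ≠ c⁻¹ := by decide
    have hc1 : c ≠ 1 := by decide
    have hc1' : c⁻¹ ≠ 1 := by decide
    have hcc : c * c⁻¹ = c⁻¹ * c := by decide
    let f : Bool × Multiplicative (ZMod n) → {x : S // x ∉ Set.center S} :=
      fun p => ⟨((if p.1 then c else c⁻¹), p.2),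
        hcen _ (by dsimp; split <;> assumption)⟩
    have hfinj : Function.Injective f := by
      intro ⟨b, a⟩ ⟨b', a'⟩ h
      have h' := congrArg Subtype.val h
      have h1 : (if b then c else c⁻¹) = (if b' then c else c⁻¹) := congrArg Prod.fst h'
      have h2 : a = a' := congrArg Prod.snd h'
      cases b <;> cases b' <;> simp_all
    set t : Finset {x : S // x ∉ Set.center S} := Finset.univ.image f with ht
    have htcard : t.card = 2 * n := by
      rw [ht, Finset.card_image_of_injective _ hfinj, Finset.card_univ]
      simp [ZMod.card, two_mul]
    have hclique : (commGraph S).IsClique t := by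
      intro x hx y hy hxy
      simp only [ht, Finset.coe_image, Set.mem_image] at hx hy
      obtain ⟨⟨b, a⟩, -, rfl⟩ := hx
      obtain ⟨⟨b', a'⟩, -, rfl⟩ := hy
      refine ⟨hxy, ?_⟩
      show ((if b then c else c⁻¹) * (if b' then c else c⁻¹), a * a')
        = ((if b' then c else c⁻¹) * (if b then c else c⁻¹), a' * a)
      refine Prod.ext ?_ (mul_comm _ _)
      dsimp only
      cases b <;> cases b' <;>
        simp only [if_true, Bool.false_eq_true, if_false] <;>
        first | rfl | exact hcc.symm | exact hcc
    calc 2 * n = t.card := htcard.symm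
      _ ≤ _ := hclique.card_le_cliqueNum
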